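/- For an integer m ≥ 0 and a real number c, let S(m,c) denote the multiset {c + (m+1)/2 − j : j = 1,…,m} of reals (an arithmetic progression of length m, mean c and common difference 1; S(0,c) is empty). Let m ≥ 1 and k ≥ 1 be integers with k ≠ m, and let 0 < s < 1/2. Let B be the multiset obtained by adding 1/2 to every element of S(m, k/2+s) ⊔ S(m, k/2−s) ⊔ S(m, −k/2+s) ⊔ S(m, −k/2−s), and let ξ′ = S(m−1, k/2+s) ⊔ S(m−1, k/2−s) ⊔ S(m−1, −k/2+s) ⊔ S(m−1, −k/2−s). Then ξ′ is a submultiset of B, ξ′ is symmetric, and ξ′ is the unique symmetric submultiset of B of cardinality 4(m−1). -/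

import Mathlib

/-- The multiset `S(m,c) = {c + (m+1)/2 − j : j = 1,…,m}` of reals: an arithmetic
progression of length `m`, mean `c` and common difference `1` (`S(0,c)` is empty). -/
noncomputable def seg (m : ℕ) (c : ℝ) : Multiset ℝ :=
  (Multiset.range m).map (fun j => c + ((m : ℝ) + 1) / 2 - ((j : ℝ) + 1))

/-- The multiplicity of `x` in a multiset of reals (using classical decidability). -/
noncomputable def mcount (x : ℝ) (T : Multiset ℝ) : ℕ :=
  @Multiset.count ℝ (Classical.decEq ℝ) x T

/-- A multiset of reals is symmetric if every `x` occurs with the same multiplicity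
as `−x`. -/
def IsSymmetric (T : Multiset ℝ) : Prop := ∀ x : ℝ, mcount x T = mcount (-x) T

lemma mcount_eq (x : ℝ) (T : Multiset ℝ) : mcount x T = Multiset.count x T := by
  unfold mcount
  congr 1

lemma seg_eq (m : ℕ) (c : ℝ) :
    seg m c = (Multiset.range m).map (fun j : ℕ => c + ((m : ℝ) + 1) / 2 - ((j : ℝ) + 1)) := by
  unfold seg
  simp [Multiset.bind, Multiset.map_map]
  rw [Function.comp_def, ← Multiset.bind]
  simp only [Multiset.map_singleton]
  rw [Multiset.bind_singleton]

lemma seg_zero (c : ℝ) : seg 0 c = 0 := by simp [seg_eq]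

lemma seg_succ_bot (n : ℕ) (c : ℝ) :
    seg (n + 1) c = (c - (n : ℝ) / 2) ::ₘ seg n (c + 1 / 2) := by
  rw [seg_eq, seg_eq, Multiset.range_succ, Multiset.map_cons]
  congr 1
  · push_cast; ring
  · apply Multiset.map_congr rfl
    intro j hj
    push_cast; ring

lemma seg_succ_top (n : ℕ) (c : ℝ) :
    seg (n + 1) c = (c + (n : ℝ) / 2) ::ₘ seg n (c - 1 / 2) := by
  induction n generalizing c with
  | zero => rw [seg_succ_bot]; norm_num [seg_zero]
  | succ n ih =>
    rw [seg_succ_bot (n + 1) c, ih (c + 1 / 2), seg_succ_bot n (c - 1 / 2),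
      Multiset.cons_swap]
    congr 1
    · push_cast; ring
    congr 1
    · push_cast; ring
    · congr 1; ring

lemma seg_neg (n : ℕ) (c : ℝ) : (seg n c).map (fun x => -x) = seg n (-c) := by
  induction n generalizing c with
  | zero => simp [seg_zero]
  | succ n ih =>
    rw [seg_succ_bot, Multiset.map_cons, ih, seg_succ_top]
    congr 1
    · ring
    · congr 1; ring

lemma seg_shift (n : ℕ) (c a : ℝ) :
    (seg n c).map (fun x => x + a) = seg n (c + a) := by
  rw [seg_eq, seg_eq, Multiset.map_map]
  apply Multiset.map_congr rfl
  intro j hj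
  simp only [Function.comp_apply]
  ring

lemma seg_card (n : ℕ) (c : ℝ) : Multiset.card (seg n c) = n := by simp [seg_eq]

/-- Abstract uniqueness argument: if `B = D + ξ'` with `D = {t₁,t₂,t₃,t₄}` pairwise
distinct, `ξ'` symmetric, and no sum of two elements of `D` vanishes, then any
symmetric `T ≤ B` with `card T + 4 = card B` equals `ξ'`. -/
lemma main_aux (B ξ' : Multiset ℝ) (t1 t2 t3 t4 : ℝ)
    (hBD : B = (t1 ::ₘ t2 ::ₘ t3 ::ₘ {t4}) + ξ')
    (hXsym : ∀ x : ℝ, Multiset.count x ξ' = Multiset.count (-x) ξ')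
    (h12 : t1 ≠ t2) (h13 : t1 ≠ t3) (h14 : t1 ≠ t4)
    (h23 : t2 ≠ t3) (h24 : t2 ≠ t4) (h34 : t3 ≠ t4)
    (hneg : ∀ x ∈ (t1 ::ₘ t2 ::ₘ t3 ::ₘ {t4} : Multiset ℝ),
      ∀ y ∈ (t1 ::ₘ t2 ::ₘ t3 ::ₘ {t4} : Multiset ℝ), x + y ≠ 0)
    (T : Multiset ℝ) (hTB : T ≤ B)
    (hTsym : ∀ x : ℝ, Multiset.count x T = Multiset.count (-x) T)
    (hTcard : Multiset.card T + 4 = Multiset.card B) : T = ξ' := by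
  classical
  set D : Multiset ℝ := t1 ::ₘ t2 ::ₘ t3 ::ₘ {t4} with hD
  have hDcard : Multiset.card D = 4 := by simp [hD]
  have hE : B - T + T = B := tsub_add_cancel_of_le hTB
  have hEcard : Multiset.card (B - T) = 4 := by
    have := congrArg Multiset.card hE
    rw [Multiset.card_add] at this
    omega
  have hcnt : ∀ x ∈ D, 1 ≤ Multiset.count x (B - T) := by
    intro x hx
    have hxD : 1 ≤ Multiset.count x D := Multiset.one_le_count_iff_mem.mpr hx
    have hnegD : Multiset.count (-x) D = 0 := by
      rw [Multiset.count_eq_zero]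
      intro hmem
      exact hneg x hx (-x) hmem (by ring)
    have h1 : Multiset.count (-x) T ≤ Multiset.count (-x) B :=
      Multiset.count_le_of_le _ hTB
    have h2 : Multiset.count (-x) B = Multiset.count (-x) D + Multiset.count (-x) ξ' := by
      rw [hBD, Multiset.count_add]
    have h3 : Multiset.count x B = Multiset.count x D + Multiset.count x ξ' := by
      rw [hBD, Multiset.count_add]
    have h4 : Multiset.count (-x) ξ' = Multiset.count x ξ' := (hXsym x).symm
    have h5 : Multiset.count x (B - T) = Multiset.count x B - Multiset.count x T :=
      Multiset.count_sub x B T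
    have h6 : Multiset.count x T = Multiset.count (-x) T := hTsym x
    omega
  have hnodup : D.Nodup := by
    simp only [hD, Multiset.nodup_cons, Multiset.mem_cons, Multiset.mem_singleton,
      Multiset.nodup_singleton, and_true]
    refine ⟨?_, ?_, ?_⟩
    · push_neg; exact ⟨h12, h13, h14⟩
    · push_neg; exact ⟨h23, h24⟩
    · exact h34
  have hDE : D ≤ B - T := by
    rw [Multiset.le_iff_count]
    intro x
    by_cases hx : x ∈ D
    · rw [Multiset.count_eq_one_of_mem hnodup hx]
      exact hcnt x hx
    · rw [Multiset.count_eq_zero_of_notMem hx]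
      exact Nat.zero_le _
  have hED : D = B - T := Multiset.eq_of_le_of_card_le hDE (by omega)
  have h7 : D + T = B := by rw [hED]; exact hE
  have h8 : D + T = D + ξ' := by rw [h7, hBD]
  exact add_left_cancel h8

/-- Let `m, k ≥ 1` with `k ≠ m` and `0 < s < 1/2`.  Let `B` be the
multiset obtained by adding `1/2` to every element of
`S(m, k/2+s) ⊔ S(m, k/2−s) ⊔ S(m, −k/2+s) ⊔ S(m, −k/2−s)`, and let
`ξ′ = S(m−1, k/2+s) ⊔ S(m−1, k/2−s) ⊔ S(m−1, −k/2+s) ⊔ S(m−1, −k/2−s)`.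
Then `ξ′` is a symmetric submultiset of `B` of cardinality `4(m−1)`, and it is the
unique such: any symmetric submultiset of `B` of cardinality `4(m−1)` equals `ξ′`. -/
theorem stmt_11 (m k : ℕ) (hm : 1 ≤ m) (hk : 1 ≤ k) (hkm : k ≠ m)
    (s : ℝ) (hs0 : 0 < s) (hs1 : s < 1 / 2) :
    let B : Multiset ℝ :=
      (seg m ((k : ℝ) / 2 + s) + seg m ((k : ℝ) / 2 - s)
        + seg m (-(k : ℝ) / 2 + s) + seg m (-(k : ℝ) / 2 - s)).map (fun x => x + 1 / 2)
    let ξ' : Multiset ℝ :=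
      seg (m - 1) ((k : ℝ) / 2 + s) + seg (m - 1) ((k : ℝ) / 2 - s)
        + seg (m - 1) (-(k : ℝ) / 2 + s) + seg (m - 1) (-(k : ℝ) / 2 - s)
    ξ' ≤ B ∧ IsSymmetric ξ' ∧ Multiset.card ξ' = 4 * (m - 1)
      ∧ ∀ T : Multiset ℝ, T ≤ B → IsSymmetric T → Multiset.card T = 4 * (m - 1) → T = ξ' := by
  intro B ξ'
  obtain ⟨n, rfl⟩ : ∃ n, m = n + 1 := ⟨m - 1, by omega⟩
  have hB : B = (seg (n + 1) ((k : ℝ) / 2 + s) + seg (n + 1) ((k : ℝ) / 2 - s)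
      + seg (n + 1) (-(k : ℝ) / 2 + s) + seg (n + 1) (-(k : ℝ) / 2 - s)).map
      (fun x => x + 1 / 2) := rfl
  have hXi : ξ' = seg n ((k : ℝ) / 2 + s) + seg n ((k : ℝ) / 2 - s)
      + seg n (-(k : ℝ) / 2 + s) + seg n (-(k : ℝ) / 2 - s) := rfl
  clear_value B ξ'
  have key : ∀ c : ℝ, (seg (n + 1) c).map (fun x => x + 1 / 2)
      = (c + ((n : ℝ) + 1) / 2) ::ₘ seg n c := by
    intro c
    rw [seg_shift, seg_succ_top]
    congr 1
    · push_cast; ring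
    · congr 1; ring
  have hBD : B = ((((k : ℝ) / 2 + s) + ((n : ℝ) + 1) / 2) ::ₘ
      (((k : ℝ) / 2 - s) + ((n : ℝ) + 1) / 2) ::ₘ
      ((-(k : ℝ) / 2 + s) + ((n : ℝ) + 1) / 2) ::ₘ
      {(-(k : ℝ) / 2 - s) + ((n : ℝ) + 1) / 2}) + ξ' := by
    rw [hB, Multiset.map_add, Multiset.map_add, Multiset.map_add, key, key, key, key, hXi]
    simp only [← Multiset.singleton_add]
    abel
  -- symmetry of ξ'
  have hXneg : ξ'.map (fun x => -x) = ξ' := by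
    rw [hXi, Multiset.map_add, Multiset.map_add, Multiset.map_add,
      seg_neg, seg_neg, seg_neg, seg_neg,
      show -((k : ℝ) / 2 + s) = -(k : ℝ) / 2 - s by ring,
      show -((k : ℝ) / 2 - s) = -(k : ℝ) / 2 + s by ring,
      show -(-(k : ℝ) / 2 + s) = (k : ℝ) / 2 - s by ring,
      show -(-(k : ℝ) / 2 - s) = (k : ℝ) / 2 + s by ring]
    abel
  have hXsym : ∀ x : ℝ, Multiset.count x ξ' = Multiset.count (-x) ξ' := by
    intro x
    have h := Multiset.count_map_eq_count' (fun y : ℝ => -y) ξ' neg_injective (-x)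
    simp only [neg_neg] at h
    rw [hXneg] at h
    exact h
  have hXcard : Multiset.card ξ' = 4 * n := by
    rw [hXi]
    simp only [Multiset.card_add, seg_card]
    ring
  have hBcard : Multiset.card B = 4 * n + 4 := by
    rw [hB]
    simp only [Multiset.card_map, Multiset.card_add, seg_card]
    ring
  -- real arithmetic facts
  have hkR : (1 : ℝ) ≤ (k : ℝ) := by exact_mod_cast hk
  have hnR : (0 : ℝ) ≤ (n : ℝ) := Nat.cast_nonneg n
  have hkm2 : (k : ℝ) ≤ (n : ℝ) ∨ (n : ℝ) + 2 ≤ (k : ℝ) := by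
    rcases Nat.lt_or_ge k (n + 1) with h | h
    · left; exact_mod_cast Nat.lt_succ_iff.mp h
    · right
      have : n + 2 ≤ k := by omega
      exact_mod_cast this
  refine ⟨?_, ?_, ?_, ?_⟩
  · -- ξ' ≤ B
    rw [hBD]
    exact Multiset.le_add_left _ _
  · -- IsSymmetric ξ'
    intro x
    rw [mcount_eq, mcount_eq]
    exact hXsym x
  · -- card
    rw [hXcard]
    omega
  · -- uniqueness
    intro T hTB hTsym hTcard
    refine main_aux B ξ' _ _ _ _ hBD hXsym ?_ ?_ ?_ ?_ ?_ ?_ ?_ T hTB ?_ ?_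
    · intro h; linarith
    · intro h; linarith
    · intro h; linarith
    · intro h; rcases hkm2 with h' | h' <;> linarith
    · intro h; linarith
    · intro h; linarith
    · -- hneg
      intro x hx y hy
      simp only [Multiset.mem_cons, Multiset.mem_singleton] at hx hy
      rcases hx with rfl | rfl | rfl | rfl <;> rcases hy with rfl | rfl | rfl | rfl <;>
        intro h <;> rcases hkm2 with h' | h' <;> linarith
    · intro x
      have := hTsym x
      rwa [mcount_eq, mcount_eq] at this
    · rw [hTcard, hBcard]
      omega
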